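/- Lemma 4.2 (exponential lower bound): Let 𝒳 be a Polish space and ℋ a concept class with |ℋ| > 2 whose members are universally measurable. For any learning algorithm ĥ_n, there exists a realizable distribution P on 𝒳 × {0,1} such that E[er_P(ĥ_n)] ≥ 2^{-n-2} for infinitely many n. -/

import Mathlib

open scoped ENNReal

/-- A function is universally measurable if it is measurable with respect to (the completion of)
every Borel probability measure on its domain. -/
def UniversallyMeasurable {α β : Type*} [MeasurableSpace α] [MeasurableSpace β] (f : α → β) : Prop :=
  ∀ μ : MeasureTheory.Measure α, MeasureTheory.IsProbabilityMeasure μ →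
    MeasureTheory.NullMeasurable f μ

variable {𝒳 : Type*}

/-- The error of a classifier `h` under distribution `P` on `𝒳 × {0,1}`. -/
noncomputable def errP [MeasurableSpace 𝒳] (P : MeasureTheory.Measure (𝒳 × Bool))
    (h : 𝒳 → Bool) : ℝ≥0∞ :=
  P {p : 𝒳 × Bool | h p.1 ≠ p.2}

/-- `P` is realizable w.r.t. the concept class `ℋ`: `inf_{h ∈ ℋ} er_P(h) = 0`. -/
def Realizable [MeasurableSpace 𝒳] (ℋ : Set (𝒳 → Bool))
    (P : MeasureTheory.Measure (𝒳 × Bool)) : Prop :=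
  (⨅ h ∈ ℋ, errP P h) = 0

/-- A learning algorithm: a sequence of universally measurable maps
`H_n : (𝒳 × {0,1})^n × 𝒳 → {0,1}`. -/
structure LearningAlgorithm (𝒳 : Type*) [MeasurableSpace 𝒳] where
  H : ∀ n : ℕ, (Fin n → 𝒳 × Bool) → 𝒳 → Bool
  meas : ∀ n : ℕ, UniversallyMeasurable fun q : (Fin n → 𝒳 × Bool) × 𝒳 => H n q.1 q.2

/-- Expected error `E[er_P(ĥ_n)]` of the output of a learning algorithm on an i.i.d. sample of
size `n` from `P`, i.e. integration with respect to `P^{⊗n}`. -/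
noncomputable def expErr [MeasurableSpace 𝒳] (P : MeasureTheory.Measure (𝒳 × Bool))
    (A : LearningAlgorithm 𝒳) (n : ℕ) : ℝ≥0∞ :=
  MeasureTheory.lintegral (MeasureTheory.Measure.pi fun _ : Fin n => P)
    fun s => errP P (A.H n s)

/-- A rate function: `R : ℕ → [0,1]` with `R(n) → 0`. -/
def IsRate (R : ℕ → ℝ) : Prop :=
  (∀ n, R n ∈ Set.Icc (0 : ℝ) 1) ∧ Filter.Tendsto R Filter.atTop (nhds 0)

/-- `ℋ` is learnable at rate `R`. -/
def LearnableAtRate [MeasurableSpace 𝒳] (ℋ : Set (𝒳 → Bool)) (R : ℕ → ℝ) : Prop :=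
  ∃ A : LearningAlgorithm 𝒳,
    ∀ P : MeasureTheory.Measure (𝒳 × Bool),
      MeasureTheory.IsProbabilityMeasure P → Realizable ℋ P →
        ∃ C > (0 : ℝ), ∃ c > (0 : ℝ), ∀ n : ℕ,
          expErr P A n ≤ ENNReal.ofReal (C * R ⌈c * (n : ℝ)⌉₊)

/-- `ℋ` is not learnable at rate faster than `R`. -/
def NotLearnableFasterThan [MeasurableSpace 𝒳] (ℋ : Set (𝒳 → Bool)) (R : ℕ → ℝ) : Prop :=
  ∀ A : LearningAlgorithm 𝒳,
    ∃ P : MeasureTheory.Measure (𝒳 × Bool),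
      MeasureTheory.IsProbabilityMeasure P ∧ Realizable ℋ P ∧
        ∃ C > (0 : ℝ), ∃ c > (0 : ℝ),
          {n : ℕ | ENNReal.ofReal (C * R ⌈c * (n : ℝ)⌉₊) ≤ expErr P A n}.Infinite

/-- `ℋ` is learnable with optimal rate `R`. -/
def LearnableWithOptimalRate [MeasurableSpace 𝒳] (ℋ : Set (𝒳 → Bool)) (R : ℕ → ℝ) : Prop :=
  LearnableAtRate ℋ R ∧ NotLearnableFasterThan ℋ R

/-- `ℋ` requires arbitrarily slow rates. -/
def RequiresArbitrarilySlowRates [MeasurableSpace 𝒳] (ℋ : Set (𝒳 → Bool)) : Prop :=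
  ∀ R : ℕ → ℝ, IsRate R → NotLearnableFasterThan ℋ R

/-- Witness that `ℋ` is a measurable class: it is parameterized by a Polish space `Θ` via a
Borel measurable map `𝗁 : Θ × 𝒳 → {0,1}`. -/
structure MeasurableClassWitness (𝒳 : Type*) [MeasurableSpace 𝒳] (ℋ : Set (𝒳 → Bool)) where
  Θ : Type
  [tΘ : TopologicalSpace Θ]
  [mΘ : MeasurableSpace Θ]
  [polish : PolishSpace Θ]
  [borel : BorelSpace Θ]
  f : Θ → 𝒳 → Bool
  meas : Measurable (Function.uncurry f)
  range_eq : ℋ = Set.range f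

/-- `ℋ` is a measurable class (image admissible Suslin). -/
def MeasurableClass (𝒳 : Type*) [MeasurableSpace 𝒳] (ℋ : Set (𝒳 → Bool)) : Prop :=
  Nonempty (MeasurableClassWitness 𝒳 ℋ)

/-- `ℋ` has an infinite Littlestone tree: nodes are indexed by finite binary strings, and every
finite branch is consistent with some concept in `ℋ`. -/
def HasInfiniteLittlestoneTree (ℋ : Set (𝒳 → Bool)) : Prop :=
  ∃ x : List Bool → 𝒳, ∀ (y : ℕ → Bool) (n : ℕ),
    ∃ h ∈ ℋ, ∀ k ≤ n, h (x (List.ofFn fun i : Fin k => y i)) = y k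

/-- `ℋ` has an infinite VCL tree: the node at depth `k` along a branch is a `(k+1)`-tuple of
points, edges out of it are labelled by `{0,1}^{k+1}`, and every finite branch is consistent
with some concept in `ℋ`. -/
def HasInfiniteVCLTree (ℋ : Set (𝒳 → Bool)) : Prop :=
  ∃ x : ∀ k : ℕ, (∀ j : Fin k, Fin (j.val + 1) → Bool) → Fin (k + 1) → 𝒳,
    ∀ (y : ∀ k : ℕ, Fin (k + 1) → Bool) (n : ℕ),
      ∃ h ∈ ℋ, ∀ k ≤ n, ∀ i : Fin (k + 1),
        h (x k (fun j => y j.val) i) = y k i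

/-- From a concept class with more than two elements one can extract two concepts that agree
somewhere and disagree somewhere. -/
lemma exists_agree_of_two_lt_encard {ℋ : Set (𝒳 → Bool)} (hcard : 2 < ℋ.encard) :
    ∃ f g, f ∈ ℋ ∧ g ∈ ℋ ∧ ∃ x₀ x₁, f x₀ = g x₀ ∧ f x₁ ≠ g x₁ := by
  obtain ⟨a, b, ha, hb, hab⟩ := Set.one_lt_encard_iff.1 (lt_trans (by norm_num : (1:ℕ∞) < 2) hcard)
  have hsub : ¬ ℋ ⊆ {a, b} := by
    intro hs
    have h1 : ℋ.encard ≤ ({a, b} : Set (𝒳 → Bool)).encard := Set.encard_mono hs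
    rw [Set.encard_pair hab] at h1
    exact absurd h1 (not_le.2 hcard)
  obtain ⟨c, hc, hcab⟩ := Set.not_subset.1 hsub
  have hca : c ≠ a := fun h => hcab (by simp [h])
  have hcb : c ≠ b := fun h => hcab (by simp [h])
  by_cases hag : ∃ x, a x = b x
  · obtain ⟨x₀, hx₀⟩ := hag
    obtain ⟨x₁, hx₁⟩ := Function.ne_iff.1 hab
    exact ⟨a, b, ha, hb, x₀, x₁, hx₀, hx₁⟩
  · push_neg at hag
    obtain ⟨x₁, hx₁⟩ := Function.ne_iff.1 hca
    obtain ⟨x₀', hx₀'⟩ := Function.ne_iff.1 hcb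
    have hagree : c x₀' = a x₀' := by
      have := hag x₀'
      revert hx₀' this
      cases h1 : a x₀' <;> cases h2 : b x₀' <;> cases h3 : c x₀' <;> simp
    exact ⟨c, a, hc, ha, x₀', x₁, hagree, hx₁⟩

/-- **Lemma 4.2 (exponential lower bound).** If `|ℋ| > 2` (members universally measurable), then
for any learning algorithm there is a realizable distribution `P` with
`E[er_P(ĥ_n)] ≥ 2^{-n-2}` for infinitely many `n`. In particular `ℋ` is not learnable at rate
faster than `e^{-n}`. -/
theorem exponential_lower_bound
    (𝒳 : Type*) [TopologicalSpace 𝒳] [PolishSpace 𝒳] [MeasurableSpace 𝒳] [BorelSpace 𝒳]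
    (ℋ : Set (𝒳 → Bool)) (hum : ∀ h ∈ ℋ, UniversallyMeasurable h)
    (hcard : 2 < ℋ.encard) (A : LearningAlgorithm 𝒳) :
    ∃ P : MeasureTheory.Measure (𝒳 × Bool),
      MeasureTheory.IsProbabilityMeasure P ∧ Realizable ℋ P ∧
        {n : ℕ | ENNReal.ofReal ((2 : ℝ) ^ (-(n : ℝ) - 2)) ≤ expErr P A n}.Infinite := by
  classical
  obtain ⟨f, g, hf, hg, x₀, x₁, hx₀, hx₁⟩ := exists_agree_of_two_lt_encard hcard
  -- the target point and label
  set y₀ : Bool := f x₀ with hy₀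
  -- classifiers realizing each label at `x₁`
  set hcl : Bool → (𝒳 → Bool) := fun u => if f x₁ = u then f else g with hhcl
  have hcl_mem : ∀ u, hcl u ∈ ℋ := by
    intro u; by_cases h : f x₁ = u <;> simp [hhcl, h, hf, hg]
  have hcl_x₀ : ∀ u, hcl u x₀ = y₀ := by
    intro u; by_cases h : f x₁ = u <;> simp [hhcl, h, hy₀, hx₀.symm]
  have hcl_x₁ : ∀ u, hcl u x₁ = u := by
    intro u
    by_cases h : f x₁ = u
    · simp [hhcl, h]
    · have : g x₁ = u := by
        revert h hx₁; cases u <;> cases hfx : f x₁ <;> cases hgx : g x₁ <;> simp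
      simp [hhcl, h, this]
  -- the two candidate distributions
  set P : Bool → MeasureTheory.Measure (𝒳 × Bool) := fun u =>
    (2 : ℝ≥0∞)⁻¹ • MeasureTheory.Measure.dirac (x₀, y₀) +
      (2 : ℝ≥0∞)⁻¹ • MeasureTheory.Measure.dirac (x₁, u) with hP
  have hprob : ∀ u, MeasureTheory.IsProbabilityMeasure (P u) := by
    intro u
    constructor
    simp [hP, MeasureTheory.Measure.add_apply, ENNReal.inv_two_add_inv_two]
  have hPapply : ∀ u (s : Set (𝒳 × Bool)), P u s =
      (2 : ℝ≥0∞)⁻¹ * s.indicator 1 (x₀, y₀) + (2 : ℝ≥0∞)⁻¹ * s.indicator 1 (x₁, u) := by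
    intro u s
    simp [hP, MeasureTheory.Measure.add_apply, MeasureTheory.Measure.dirac_apply]
  have hreal : ∀ u, Realizable ℋ (P u) := by
    intro u
    have h0 : errP (P u) (hcl u) = 0 := by
      rw [errP, hPapply]
      have h1 : ((x₀, y₀) : 𝒳 × Bool) ∉ {p : 𝒳 × Bool | hcl u p.1 ≠ p.2} := by
        simp [hcl_x₀ u]
      have h2 : ((x₁, u) : 𝒳 × Bool) ∉ {p : 𝒳 × Bool | hcl u p.1 ≠ p.2} := by
        simp [hcl_x₁ u]
      rw [Set.indicator_of_notMem h1, Set.indicator_of_notMem h2]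
      simp
    refine le_antisymm ?_ zero_le
    exact le_trans (iInf₂_le (hcl u) (hcl_mem u)) (le_of_eq h0)
  -- error lower bound for classifiers predicting wrongly at `x₁`
  have herr_lb : ∀ u (h : 𝒳 → Bool), h x₁ ≠ u → (2 : ℝ≥0∞)⁻¹ ≤ errP (P u) h := by
    intro u h hh
    have hmem : ((x₁, u) : 𝒳 × Bool) ∈ {p : 𝒳 × Bool | h p.1 ≠ p.2} := hh
    calc (2 : ℝ≥0∞)⁻¹ = (2 : ℝ≥0∞)⁻¹ *
          Set.indicator {p : 𝒳 × Bool | h p.1 ≠ p.2} 1 (x₁, u) := by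
          rw [Set.indicator_of_mem hmem]; simp
      _ ≤ (2 : ℝ≥0∞)⁻¹ * MeasureTheory.Measure.dirac (x₁, u)
            {p : 𝒳 × Bool | h p.1 ≠ p.2} := by
          gcongr
          exact MeasureTheory.Measure.le_dirac_apply
      _ ≤ errP (P u) h := by
          rw [errP, hP]
          simp only [MeasureTheory.Measure.add_apply, MeasureTheory.Measure.smul_apply,
            smul_eq_mul]
          exact le_add_self
  -- the constant sample and the algorithm's answers on it
  set b : ℕ → Bool := fun n => ! A.H n (fun _ => (x₀, y₀)) x₁ with hb
  -- expected-error lower bound when the algorithm errs on the constant sample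
  have hexp : ∀ u n, b n = u → (2 : ℝ≥0∞)⁻¹ ^ (n + 1) ≤ expErr (P u) A n := by
    intro u n hbn
    haveI := hprob u
    set s₀ : Fin n → 𝒳 × Bool := fun _ => (x₀, y₀) with hs₀
    have hkey : (2 : ℝ≥0∞)⁻¹ ≤ errP (P u) (A.H n s₀) := by
      refine herr_lb u _ ?_
      intro hcontra
      rw [← hcontra] at hbn
      simp [hb, hs₀] at hbn
    have hsing : (2 : ℝ≥0∞)⁻¹ ^ n ≤
        (MeasureTheory.Measure.pi fun _ : Fin n => P u) {s₀} := by
      have : ({s₀} : Set (Fin n → 𝒳 × Bool)) = Set.pi Set.univ fun i => {s₀ i} := by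
        rw [Set.univ_pi_singleton]
      rw [this, MeasureTheory.Measure.pi_pi]
      calc (2 : ℝ≥0∞)⁻¹ ^ n = ∏ _i : Fin n, (2 : ℝ≥0∞)⁻¹ := by
            rw [Finset.prod_const]; simp
        _ ≤ ∏ i : Fin n, P u {s₀ i} := by
            refine Finset.prod_le_prod' fun i _ => ?_
            calc (2 : ℝ≥0∞)⁻¹ = (2 : ℝ≥0∞)⁻¹ *
                  Set.indicator {s₀ i} (1 : 𝒳 × Bool → ℝ≥0∞) (x₀, y₀) := by
                  rw [Set.indicator_of_mem (by simp [hs₀])]; simp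
              _ ≤ P u {s₀ i} := by
                  rw [hP]
                  simp only [MeasureTheory.Measure.add_apply, MeasureTheory.Measure.smul_apply,
                    smul_eq_mul]
                  refine le_trans ?_ le_self_add
                  gcongr
                  exact MeasureTheory.Measure.le_dirac_apply
    calc (2 : ℝ≥0∞)⁻¹ ^ (n + 1) = (2 : ℝ≥0∞)⁻¹ * (2 : ℝ≥0∞)⁻¹ ^ n := by
          rw [pow_succ, mul_comm]
      _ ≤ errP (P u) (A.H n s₀) *
            (MeasureTheory.Measure.pi fun _ : Fin n => P u) {s₀} := by gcongr
      _ = ∫⁻ s in {s₀}, errP (P u) (A.H n s)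
            ∂(MeasureTheory.Measure.pi fun _ : Fin n => P u) := by
          rw [MeasureTheory.lintegral_singleton]
      _ ≤ expErr (P u) A n := by
          rw [expErr]
          exact MeasureTheory.lintegral_mono' MeasureTheory.Measure.restrict_le_self le_rfl
  -- one of the two labels is chosen infinitely often
  have hpigeon : {n : ℕ | b n = true}.Infinite ∨ {n : ℕ | b n = false}.Infinite := by
    by_contra hcon
    push_neg at hcon
    obtain ⟨h1, h2⟩ := hcon
    have hU : {n : ℕ | b n = true} ∪ {n : ℕ | b n = false} = Set.univ := by
      ext n; cases h : b n <;> simp [h]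
    have : (Set.univ : Set ℕ).Finite := by
      rw [← hU]
      exact Set.Finite.union h1 h2
    exact Set.infinite_univ this
  obtain ⟨u, hu⟩ : ∃ u, {n : ℕ | b n = u}.Infinite := by
    rcases hpigeon with h | h
    exacts [⟨true, h⟩, ⟨false, h⟩]
  refine ⟨P u, hprob u, hreal u, ?_⟩
  refine hu.mono fun n hn => ?_
  have hle := hexp u n hn
  refine le_trans ?_ hle
  -- `2 ^ (-(n : ℝ) - 2) ≤ (2⁻¹) ^ (n + 1)` in `ℝ≥0∞`
  have hR : (2 : ℝ) ^ (-(n : ℝ) - 2) ≤ (2 : ℝ)⁻¹ ^ (n + 1) := by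
    have h1 : ((2 : ℝ)⁻¹) ^ (n + 1) = (2 : ℝ) ^ (-((n : ℝ) + 1)) := by
      rw [inv_pow, ← Real.rpow_natCast (2 : ℝ) (n + 1), ← Real.rpow_neg (by norm_num)]
      push_cast
      ring_nf
    rw [h1]
    rw [Real.rpow_le_rpow_left_iff (by norm_num : (1 : ℝ) < 2)]
    linarith
  calc ENNReal.ofReal ((2 : ℝ) ^ (-(n : ℝ) - 2)) ≤
        ENNReal.ofReal ((2 : ℝ)⁻¹ ^ (n + 1)) := ENNReal.ofReal_le_ofReal hR
    _ = (2 : ℝ≥0∞)⁻¹ ^ (n + 1) := by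
        rw [ENNReal.ofReal_pow (by norm_num), ENNReal.ofReal_inv_of_pos (by norm_num)]
        norm_num
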